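/- The fixed point sets of the Douglas–Rachford operator satisfy Fix T = Fix T* = Fix(T* T) = (U ∩ V) ⊕ (U^⊥ ∩ V^⊥), where the sum (U ∩ V) + (U^⊥ ∩ V^⊥) is an orthogonal direct sum (the two summands are orthogonal to each other). -/

import Mathlib

noncomputable section

variable {X : Type*} [NormedAddCommGroup X] [InnerProductSpace ℝ X] [CompleteSpace X]

/-- The orthogonal projection onto a closed subspace `W`, as an operator on `X`. -/
noncomputable def proj (W : Submodule ℝ X) [Submodule.HasOrthogonalProjection W] : X →L[ℝ] X :=
  W.subtypeL.comp (Submodule.orthogonalProjectionOnto W)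

instance infHOP (U V : Submodule ℝ X) [CompleteSpace U] [CompleteSpace V] :
    Submodule.HasOrthogonalProjection (U ⊓ V) := by
  have hU : IsClosed (U : Set X) := (completeSpace_coe_iff_isComplete.mp ‹_›).isClosed
  have hV : IsClosed (V : Set X) := (completeSpace_coe_iff_isComplete.mp ‹_›).isClosed
  have : CompleteSpace (U ⊓ V : Submodule ℝ X) := (hU.inter hV).completeSpace_coe
  infer_instance

/-- The fixed point set `Fix T = {x | T x = x}` of a continuous linear operator `T`,
as a submodule of `X`. -/
noncomputable def fixedSpace (T : X →L[ℝ] X) : Submodule ℝ X := LinearMap.ker ((T - 1 : X →L[ℝ] X) : X →ₗ[ℝ] X)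

instance fixedSpaceHOP (T : X →L[ℝ] X) : Submodule.HasOrthogonalProjection (fixedSpace T) := by
  have h : IsClosed ((fixedSpace T : Submodule ℝ X) : Set X) := by
    have : ((fixedSpace T : Submodule ℝ X) : Set X) = {x | T x = x} := by
      ext x; simp [fixedSpace, LinearMap.mem_ker, sub_eq_zero]
    rw [this]
    exact isClosed_eq T.continuous continuous_id
  have : CompleteSpace (fixedSpace T) := h.completeSpace_coe
  infer_instance

/-- The reflector `R_W = 2 P_W − Id` associated with `W`. -/
noncomputable def reflector (W : Submodule ℝ X) [Submodule.HasOrthogonalProjection W] : X →L[ℝ] X :=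
  2 • proj W - 1

/-- The Douglas–Rachford operator `T = T_{V,U} = P_V (2 P_U − Id) + Id − P_U`.
(The first argument is `U`, the second is `V`.) -/
noncomputable def drOperator (U V : Submodule ℝ X) [Submodule.HasOrthogonalProjection U]
    [Submodule.HasOrthogonalProjection V] : X →L[ℝ] X :=
  proj V * (2 • proj U - 1) + 1 - proj U

/-- The cosine of the Friedrichs angle between `U` and `V`. -/
noncomputable def friedrichs (U V : Submodule ℝ X) : ℝ :=
  sSup {c : ℝ | ∃ u v : X, u ∈ U ⊓ (U ⊓ V)ᗮ ∧ v ∈ V ⊓ (U ⊓ V)ᗮ ∧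
    ‖u‖ ≤ 1 ∧ ‖v‖ ≤ 1 ∧ c = inner ℝ u v}

lemma proj_mem (W : Submodule ℝ X) [Submodule.HasOrthogonalProjection W] (x : X) : proj W x ∈ W :=
  (W.orthogonalProjectionOnto x).2

lemma sub_proj_mem (W : Submodule ℝ X) [Submodule.HasOrthogonalProjection W] (x : X) :
    x - proj W x ∈ Wᗮ :=
  Submodule.sub_starProjection_mem_orthogonal (K := W) x

lemma proj_eq_self (W : Submodule ℝ X) [Submodule.HasOrthogonalProjection W] {x : X} (h : x ∈ W) :
    proj W x = x :=
  Submodule.starProjection_eq_self_iff.mpr h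

lemma proj_eq_zero (W : Submodule ℝ X) [Submodule.HasOrthogonalProjection W] {x : X} (h : x ∈ Wᗮ) :
    proj W x = 0 := by
  have := Submodule.orthogonalProjectionOnto_apply_of_mem_orthogonal h
  simp [proj, this]

lemma proj_adjoint (W : Submodule ℝ X) [CompleteSpace W] :
    ContinuousLinearMap.adjoint (proj W) = proj W := by
  have := isSelfAdjoint_starProjection W
  rw [IsSelfAdjoint, ContinuousLinearMap.star_eq_adjoint] at this
  exact this

lemma mem_fixedSpace {T : X →L[ℝ] X} {x : X} : x ∈ fixedSpace T ↔ T x = x := by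
  simp [fixedSpace, LinearMap.mem_ker, sub_eq_zero, ContinuousLinearMap.sub_apply]

lemma dr_apply (U V : Submodule ℝ X) [Submodule.HasOrthogonalProjection U] [Submodule.HasOrthogonalProjection V]
    (x : X) : drOperator U V x = proj V (2 • proj U x - x) + x - proj U x := by
  simp [drOperator, ContinuousLinearMap.mul_apply, ContinuousLinearMap.sub_apply,
    ContinuousLinearMap.add_apply, ContinuousLinearMap.smul_apply, ContinuousLinearMap.one_apply]

set_option linter.unusedSectionVars false

lemma fix_dr (U V : Submodule ℝ X) [CompleteSpace U] [CompleteSpace V] :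
    fixedSpace (drOperator U V) = (U ⊓ V) ⊔ (Uᗮ ⊓ Vᗮ) := by
  ext x
  rw [mem_fixedSpace, dr_apply]
  constructor
  · intro h
    have hPV : proj V (2 • proj U x - x) = proj U x := by
      have h1 : proj V (2 • proj U x - x) = x - (x - proj U x) := by
        rw [add_sub_assoc] at h
        rw [eq_sub_of_add_eq h]
      rw [h1, sub_sub_cancel]
    have hpU : proj U x ∈ U := proj_mem U x
    have hpV : proj U x ∈ V := hPV ▸ proj_mem V _
    have hbU : x - proj U x ∈ Uᗮ := sub_proj_mem U x
    have hbV : x - proj U x ∈ Vᗮ := by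
      have h2 := sub_proj_mem V (2 • proj U x - x)
      rw [hPV] at h2
      have h3 : x - proj U x = -(2 • proj U x - x - proj U x) := by
        rw [two_smul]; abel
      rw [h3]
      exact neg_mem h2
    refine Submodule.mem_sup.mpr ⟨proj U x, ⟨hpU, hpV⟩, x - proj U x, ⟨hbU, hbV⟩, by abel⟩
  · intro h
    rcases Submodule.mem_sup.mp h with ⟨p, hp, b, hb, rfl⟩
    have hU : proj U (p + b) = p := by
      rw [map_add, proj_eq_self U hp.1, proj_eq_zero U hb.1, add_zero]
    rw [hU]
    have harg : 2 • p - (p + b) = p - b := by rw [two_smul]; abel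
    rw [harg, map_sub, proj_eq_self V hp.2, proj_eq_zero V hb.2]
    abel

lemma dr_adjoint (U V : Submodule ℝ X) [CompleteSpace U] [CompleteSpace V] :
    ContinuousLinearMap.adjoint (drOperator U V) = drOperator V U := by
  rw [← ContinuousLinearMap.star_eq_adjoint]
  have hU : star (proj U) = proj U := by
    rw [ContinuousLinearMap.star_eq_adjoint]; exact proj_adjoint U
  have hV : star (proj V) = proj V := by
    rw [ContinuousLinearMap.star_eq_adjoint]; exact proj_adjoint V
  simp only [drOperator, star_sub, star_add, star_mul, star_one, star_nsmul, hU, hV]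
  ext x
  simp only [ContinuousLinearMap.add_apply, ContinuousLinearMap.sub_apply,
    ContinuousLinearMap.mul_apply, ContinuousLinearMap.one_apply,
    ContinuousLinearMap.smul_apply, two_smul, map_add, map_sub]
  abel

lemma dr_reflection (U V : Submodule ℝ X) [CompleteSpace U] [CompleteSpace V] (x : X) :
    2 • drOperator U V x - x = V.reflection (U.reflection x) := by
  have hre : ∀ (W : Submodule ℝ X) [CompleteSpace W] (y : X),
      W.reflection y = 2 • proj W y - y := by
    intro W _ y
    rw [Submodule.reflection_apply]
    rfl
  rw [hre V, hre U, dr_apply, two_smul, two_smul, two_smul]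
  abel

lemma norm_dr_refl (U V : Submodule ℝ X) [CompleteSpace U] [CompleteSpace V] (x : X) :
    ‖2 • drOperator U V x - x‖ = ‖x‖ := by
  rw [dr_reflection]
  rw [LinearIsometryEquiv.norm_map, LinearIsometryEquiv.norm_map]

lemma inner_dr (U V : Submodule ℝ X) [CompleteSpace U] [CompleteSpace V] (x : X) :
    (inner ℝ x (drOperator U V x) : ℝ) = ‖drOperator U V x‖ ^ 2 := by
  set t := drOperator U V x with ht
  have h1 : (inner ℝ (2 • t - x) (2 • t - x) : ℝ) = inner ℝ x x := by
    have := norm_dr_refl U V x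
    rw [← ht] at this
    rw [real_inner_self_eq_norm_sq, real_inner_self_eq_norm_sq, this]
  rw [two_smul] at h1
  simp only [inner_sub_left, inner_sub_right, inner_add_left, inner_add_right] at h1
  have hc : (inner ℝ t x : ℝ) = inner ℝ x t := real_inner_comm x t
  rw [← real_inner_self_eq_norm_sq]
  linarith


/-- `Fix T = Fix T* = Fix(T* T) = (U ∩ V) ⊕ (U^⊥ ∩ V^⊥)`, where the sum
`(U ∩ V) + (U^⊥ ∩ V^⊥)` is an orthogonal direct sum. -/
theorem drOperator_fixedSpace
    (U V : Submodule ℝ X) [CompleteSpace U] [CompleteSpace V] :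
    fixedSpace (drOperator U V) = fixedSpace (ContinuousLinearMap.adjoint (drOperator U V)) ∧
    fixedSpace (drOperator U V) =
      fixedSpace (ContinuousLinearMap.adjoint (drOperator U V) * drOperator U V) ∧
    fixedSpace (drOperator U V) = (U ⊓ V) ⊔ (Uᗮ ⊓ Vᗮ) ∧
    (∀ x ∈ U ⊓ V, ∀ y ∈ Uᗮ ⊓ Vᗮ, (inner ℝ x y : ℝ) = 0) := by
  have hadj : fixedSpace (ContinuousLinearMap.adjoint (drOperator U V)) =
      fixedSpace (drOperator U V) := by
    rw [dr_adjoint, fix_dr, fix_dr, inf_comm U V, inf_comm Uᗮ Vᗮ]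
  refine ⟨hadj.symm, ?_, fix_dr U V, ?_⟩
  · ext x
    rw [mem_fixedSpace, mem_fixedSpace, ContinuousLinearMap.mul_apply]
    constructor
    · intro h
      have h' : ContinuousLinearMap.adjoint (drOperator U V) x = x :=
        mem_fixedSpace.mp (show x ∈ fixedSpace (ContinuousLinearMap.adjoint (drOperator U V)) by
          rw [hadj]; exact mem_fixedSpace.mpr h)
      rw [h, h']
    · intro h
      have h1 : ‖drOperator U V x‖ ^ 2 = ‖x‖ ^ 2 := by
        have h0 : (inner ℝ (ContinuousLinearMap.adjoint (drOperator U V) (drOperator U V x)) x : ℝ)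
            = inner ℝ (drOperator U V x) (drOperator U V x) :=
          ContinuousLinearMap.adjoint_inner_left _ _ _
        rw [h] at h0
        rw [← real_inner_self_eq_norm_sq, ← real_inner_self_eq_norm_sq, ← h0]
      have h2 := inner_dr U V x
      have h3 : ‖drOperator U V x - x‖ ^ 2 = 0 := by
        rw [norm_sub_sq_real]
        have hc : (inner ℝ (drOperator U V x) x : ℝ) = inner ℝ x (drOperator U V x) :=
          real_inner_comm _ _
        linarith
      have h4 : drOperator U V x - x = 0 := by
        rwa [pow_eq_zero_iff (by norm_num), norm_eq_zero] at h3
      exact sub_eq_zero.mp h4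
  · intro x hx y hy
    exact hy.1 x hx.1
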